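/- Let λ > 0 and ω ∈ ℝ. Define the complex Hansen potential φ_H = ((1 - λ² - ω²) - 2·i·ω)/(4λ) and the Ernst potential φ_E = (1 - λ - i·ω)/(1 + λ + i·ω). Then φ_E · (1 + √(4·|φ_H|² + 1)) = 2·φ_H; equivalently, φ_E = 2φ_H/(1 + √(1 + 4|φ_H|²)). -/

import Mathlib

open Complex in
/-- For `λ > 0`, `ω ∈ ℝ`, the complex Hansen potential
`φ_H = ((1-λ²-ω²) - 2iω)/(4λ)` and the Ernst potential `φ_E = (1-λ-iω)/(1+λ+iω)`
satisfy `φ_E·(1 + √(4|φ_H|²+1)) = 2φ_H`; equivalently `φ_E = 2φ_H/(1+√(1+4|φ_H|²))`. -/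
theorem stmt_18 (l ω : ℝ) (hl : 0 < l)
    (φH φE : ℂ)
    (hH : φH = (((1 - l ^ 2 - ω ^ 2 : ℝ) : ℂ) - 2 * I * (ω:ℂ)) / (4 * (l:ℂ)))
    (hE : φE = (1 - (l:ℂ) - I * (ω:ℂ)) / (1 + (l:ℂ) + I * (ω:ℂ))) :
    φE * (1 + ((Real.sqrt (4 * ‖φH‖ ^ 2 + 1) : ℝ) : ℂ)) = 2 * φH ∧
    φE = 2 * φH / (1 + ((Real.sqrt (1 + 4 * ‖φH‖ ^ 2) : ℝ) : ℂ)) := by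
  have hl0 : (l:ℝ) ≠ 0 := ne_of_gt hl
  have habs : ‖φH‖ ^ 2 = ((1 - l ^ 2 - ω ^ 2) ^ 2 + 4 * ω ^ 2) / (16 * l ^ 2) := by
    rw [hH, ← Complex.normSq_eq_norm_sq, Complex.normSq_div, Complex.normSq_apply,
      Complex.normSq_apply]
    simp [pow_two, Complex.mul_re, Complex.mul_im]
    ring
  have harg : 4 * ‖φH‖ ^ 2 + 1 = ((1 + l ^ 2 + ω ^ 2) / (2 * l)) ^ 2 := by
    rw [habs]; field_simp; ring
  have hs : Real.sqrt (4 * ‖φH‖ ^ 2 + 1) = (1 + l ^ 2 + ω ^ 2) / (2 * l) := by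
    rw [harg, Real.sqrt_sq]
    positivity
  have hden : (1 + (l:ℂ) + I * (ω:ℂ)) ≠ 0 := by
    intro h
    have := congrArg Complex.re h
    simp at this
    linarith
  have key : φE * (1 + ((Real.sqrt (4 * ‖φH‖ ^ 2 + 1) : ℝ) : ℂ)) = 2 * φH := by
    rw [hs, hE, hH]
    push_cast
    have hl0' : ((l:ℂ)) ≠ 0 := by exact_mod_cast Complex.ofReal_ne_zero.mpr hl0
    field_simp
    ring_nf
    rw [Complex.I_sq]
    ring
  refine ⟨key, ?_⟩
  have hcomm : (1 + 4 * ‖φH‖ ^ 2) = 4 * ‖φH‖ ^ 2 + 1 := by ring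
  rw [hcomm]
  have hpos : (0:ℝ) < 1 + Real.sqrt (4 * ‖φH‖ ^ 2 + 1) := by
    have := Real.sqrt_nonneg (4 * ‖φH‖ ^ 2 + 1)
    linarith
  have hne : (1 + ((Real.sqrt (4 * ‖φH‖ ^ 2 + 1) : ℝ) : ℂ)) ≠ 0 := by
    intro h
    have := congrArg Complex.re h
    simp at this
    linarith
  field_simp [hne] at key ⊢
  linear_combination key
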